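/- Let σ < 0, δ < 0 with σ² + 4δ = 0, let A = [[σ, δ], [1, 0]], and let r = σ/2. Fix ρ ≥ 0 and let S₁ = {(x, y) ∈ Σ_ρ⁺ \ Σ_ρ : x > r·y}. Then for every q ∈ S₁: (i) exp(t·A)·q → (0,0) as t → +∞; and (ii) there exists t¹ < 0 such that exp(t¹·A)·q ∈ Σ_ρ. -/

import Mathlib

open Matrix Filter

lemma exp_sq_zero_matrix (X : Matrix (Fin 2) (Fin 2) ℝ) (hX : X ^ 2 = 0) :
    NormedSpace.exp X = 1 + X := by
  letI : SeminormedRing (Matrix (Fin 2) (Fin 2) ℝ) := Matrix.linftyOpSemiNormedRing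
  letI : NormedRing (Matrix (Fin 2) (Fin 2) ℝ) := Matrix.linftyOpNormedRing
  letI : NormedAlgebra ℝ (Matrix (Fin 2) (Fin 2) ℝ) := Matrix.linftyOpNormedAlgebra
  rw [NormedSpace.exp_eq_tsum (𝕂 := ℝ)]
  show (∑' n : ℕ, (n.factorial : ℝ)⁻¹ • X ^ n) = 1 + X
  rw [tsum_eq_sum (s := Finset.range 2) ?_]
  · simp [Finset.sum_range_succ]
  · intro n hn
    have h2 : 2 ≤ n := by simpa using Nat.not_lt.mp (fun hlt => hn (Finset.mem_range.mpr hlt))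
    have : X ^ n = 0 := by
      calc X ^ n = X ^ 2 * X ^ (n - 2) := by rw [← pow_add]; congr 1; omega
      _ = 0 := by rw [hX, zero_mul]
    simp [this]

lemma exp_scalar_add_nil (c : ℝ) (X : Matrix (Fin 2) (Fin 2) ℝ) (hX : X ^ 2 = 0) :
    NormedSpace.exp (c • (1 : Matrix (Fin 2) (Fin 2) ℝ) + X) = Real.exp c • (1 + X) := by
  rw [Matrix.exp_add_of_commute _ _ ((Commute.one_left X).smul_left c)]
  rw [exp_sq_zero_matrix X hX]
  have h1 : NormedSpace.exp (c • (1 : Matrix (Fin 2) (Fin 2) ℝ)) =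
      Real.exp c • (1 : Matrix (Fin 2) (Fin 2) ℝ) := by
    letI : SeminormedRing (Matrix (Fin 2) (Fin 2) ℝ) := Matrix.linftyOpSemiNormedRing
    letI : NormedRing (Matrix (Fin 2) (Fin 2) ℝ) := Matrix.linftyOpNormedRing
    letI : NormedAlgebra ℝ (Matrix (Fin 2) (Fin 2) ℝ) := Matrix.linftyOpNormedAlgebra
    rw [← Algebra.algebraMap_eq_smul_one, ← Algebra.algebraMap_eq_smul_one, Real.exp_eq_exp_ℝ]
    exact (NormedSpace.algebraMap_exp_comm c).symm
  rw [h1, smul_mul_assoc, one_mul]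

lemma aux_tendsto (r a b : ℝ) (hr : r < 0) :
    Tendsto (fun t : ℝ => Real.exp (t * r) * (a + t * b)) atTop (nhds 0) := by
  have h1 : Tendsto (fun t : ℝ => t * r) atTop atBot :=
    (tendsto_mul_const_atBot_of_neg hr).mpr tendsto_id
  have he : Tendsto (fun t : ℝ => Real.exp (t * r)) atTop (nhds 0) :=
    Real.tendsto_exp_atBot.comp h1
  have ht : Tendsto (fun t : ℝ => t * Real.exp (t * r)) atTop (nhds 0) := by
    have h2 : Tendsto (fun t : ℝ => -r * t) atTop atTop :=
      (tendsto_const_mul_atTop_of_pos (by linarith)).mpr tendsto_id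
    have h3 := (Real.tendsto_pow_mul_exp_neg_atTop_nhds_zero 1).comp h2
    have h4 := h3.const_mul ((-r)⁻¹)
    rw [mul_zero] at h4
    refine h4.congr fun t => ?_
    have hrne : -r ≠ 0 := by linarith
    simp only [Function.comp_apply, pow_one]
    field_simp
    rw [mul_comm r t, mul_div_assoc, div_self (by linarith : r ≠ 0), mul_one]
  have key := (he.const_mul a).add (ht.const_mul b)
  simp only [mul_zero, add_zero] at key
  exact key.congr fun t => by ring

theorem stmt_7 (σ δ ρ : ℝ) (hσ : σ < 0) (hδ : δ < 0) (hdisc : σ ^ 2 + 4 * δ = 0)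
    (hρ : 0 ≤ ρ)
    (A : Matrix (Fin 2) (Fin 2) ℝ) (hA : A = !![σ, δ; 1, 0])
    (r : ℝ) (hr : r = σ / 2)
    (h : (Fin 2 → ℝ) → ℝ)
    (hh : ∀ p : Fin 2 → ℝ, h p = if p 0 ≤ 0 then p 1 else p 1 - ρ * p 0)
    (Sig SigPlus S₁ : Set (Fin 2 → ℝ))
    (hSig : Sig = {p | h p = 0}) (hSigPlus : SigPlus = {p | 0 ≤ h p})
    (hS₁ : S₁ = {p ∈ SigPlus \ Sig | p 0 > r * p 1}) :
    ∀ q ∈ S₁,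
      Filter.Tendsto (fun t : ℝ => (NormedSpace.exp (t • A)).mulVec q) Filter.atTop (nhds 0)
      ∧ ∃ t₁ : ℝ, t₁ < 0 ∧ (NormedSpace.exp (t₁ • A)).mulVec q ∈ Sig := by
  intro q hq
  rw [hS₁] at hq
  obtain ⟨hqmem, hqx⟩ := hq
  have hrneg : r < 0 := by rw [hr]; linarith
  have hσr : σ = 2 * r := by rw [hr]; ring
  have hδr : δ = -(r ^ 2) := by rw [hr]; nlinarith [hdisc]
  set u : ℝ := q 0 - r * q 1 with hu_def
  have hu : 0 < u := by simp only [hu_def]; linarith [hqx]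
  set w : Fin 2 → ℝ := ![r * u, u] with hw_def
  set M : Matrix (Fin 2) (Fin 2) ℝ := !![r, -(r ^ 2); 1, -r] with hM_def
  have hAsum : A = r • (1 : Matrix (Fin 2) (Fin 2) ℝ) + M := by
    rw [hA, hM_def]
    ext i j
    fin_cases i <;> fin_cases j <;>
      simp [Matrix.one_apply, hσr, hδr] <;> ring
  have hM2 : M ^ 2 = 0 := by
    rw [hM_def]
    ext i j
    fin_cases i <;> fin_cases j <;>
      simp [pow_two, Matrix.mul_apply, Fin.sum_univ_two] <;> ring
  have hexp : ∀ t : ℝ, NormedSpace.exp (t • A) = Real.exp (t * r) • (1 + t • M) := by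
    intro t
    have h1 : t • A = (t * r) • (1 : Matrix (Fin 2) (Fin 2) ℝ) + t • M := by
      rw [hAsum, smul_add, smul_smul]
    rw [h1, exp_scalar_add_nil]
    rw [smul_pow, hM2, smul_zero]
  have hMq : M.mulVec q = w := by
    funext j
    fin_cases j <;>
      simp [hM_def, hw_def, Matrix.mulVec, dotProduct, Fin.sum_univ_two, hu_def] <;> ring
  have hsol : ∀ t : ℝ, (NormedSpace.exp (t • A)).mulVec q =
      fun i => Real.exp (t * r) * (q i + t * w i) := by
    intro t
    rw [hexp t]
    funext i
    rw [Matrix.smul_mulVec, Matrix.add_mulVec, Matrix.one_mulVec,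
      Matrix.smul_mulVec, hMq]
    simp [Pi.smul_apply, smul_eq_mul]
  have hform : ∀ p : Fin 2 → ℝ, h p = p 1 - ρ * max (p 0) 0 := by
    intro p
    rw [hh p]
    split_ifs with hp
    · rw [max_eq_right hp, mul_zero, sub_zero]
    · rw [max_eq_left (le_of_lt (not_le.mp hp))]
  constructor
  · rw [tendsto_pi_nhds]
    intro i
    have heq : (fun t : ℝ => (NormedSpace.exp (t • A)).mulVec q i) =
        fun t : ℝ => Real.exp (t * r) * (q i + t * w i) := by
      funext t; rw [hsol t]
    rw [heq, Pi.zero_apply]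
    exact aux_tendsto r (q i) (w i) hrneg
  · -- part (ii)
    set g : ℝ → ℝ := fun t =>
      Real.exp (t * r) * (q 1 + t * w 1) - ρ * max (Real.exp (t * r) * (q 0 + t * w 0)) 0
      with hg_def
    have hcont : Continuous g := by
      apply Continuous.sub
      · exact (Real.continuous_exp.comp (continuous_id.mul continuous_const)).mul
          (continuous_const.add (continuous_id.mul continuous_const))
      · exact continuous_const.mul
          (((Real.continuous_exp.comp (continuous_id.mul continuous_const)).mul
            (continuous_const.add (continuous_id.mul continuous_const))).max continuous_const)
    have hw1 : w 1 = u := by simp [hw_def]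
    have hqpos : 0 < h q := by
      rw [hSigPlus, hSig] at hqmem
      obtain ⟨h1, h2⟩ := hqmem
      exact lt_of_le_of_ne h1 (fun heq => h2 heq.symm)
    have hg0 : g 0 = h q := by
      simp [hg_def, Real.exp_zero, hform q]
    set t₂ : ℝ := -(|q 1| / u) - 1 with ht₂_def
    have ht₂neg : t₂ < 0 := by
      have : 0 ≤ |q 1| / u := div_nonneg (abs_nonneg _) (le_of_lt hu)
      rw [ht₂_def]; linarith
    have hy2 : q 1 + t₂ * u < 0 := by
      have hcalc : t₂ * u = -|q 1| - u := by
        rw [ht₂_def]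
        field_simp
      rw [hcalc]
      have := le_abs_self (q 1)
      linarith
    have hgneg : g t₂ < 0 := by
      have h1 : Real.exp (t₂ * r) * (q 1 + t₂ * w 1) < 0 := by
        rw [hw1]
        exact mul_neg_of_pos_of_neg (Real.exp_pos _) hy2
      have h2 : 0 ≤ ρ * max (Real.exp (t₂ * r) * (q 0 + t₂ * w 0)) 0 :=
        mul_nonneg hρ (le_max_right _ _)
      rw [hg_def]
      dsimp only
      linarith
    have hivt := intermediate_value_Icc (le_of_lt ht₂neg) hcont.continuousOn
    have h0mem : (0 : ℝ) ∈ Set.Icc (g t₂) (g 0) := by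
      constructor
      · exact le_of_lt hgneg
      · rw [hg0]; exact le_of_lt hqpos
    obtain ⟨t₁, ht₁mem, hgt₁⟩ := hivt h0mem
    refine ⟨t₁, ?_, ?_⟩
    · rcases lt_or_eq_of_le ht₁mem.2 with hlt | heq
      · exact hlt
      · exfalso; rw [heq] at hgt₁; rw [hg0] at hgt₁; linarith
    · rw [hSig]
      show h _ = 0
      rw [hsol t₁, hform]
      simpa [hg_def] using hgt₁
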